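/- Let J̃(s) = wH̃(s)w with w, H̃ as in Lemma 6.1, and set Ṽ(s) = J̃(s)⁻¹. If Ṽ(T) = 0, Ṽ'(T) = -I, and Ṽ' is Lipschitz on [0,T], then ‖(T-s)I - Ṽ(s)‖ ≲ (T-s)² for all s ∈ [0,T], and consequently there exists C > 0 such that ‖J̃(s) - (T-s)⁻¹I‖ ≤ C for all s < T. -/

import Mathlib

open Matrix

attribute [local instance] Matrix.normedAddCommGroup Matrix.normedSpace

lemma aux_norm_mul {d : ℕ} (A B : Matrix (Fin d) (Fin d) ℝ) :
    ‖A * B‖ ≤ d * ‖A‖ * ‖B‖ := by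
  rw [Matrix.norm_le_iff (by positivity)]
  intro i j
  calc ‖(A * B) i j‖ = ‖∑ k, A i k * B k j‖ := by rw [Matrix.mul_apply]
    _ ≤ ∑ k, ‖A i k * B k j‖ := norm_sum_le _ _
    _ ≤ ∑ _k : Fin d, ‖A‖ * ‖B‖ := by
        refine Finset.sum_le_sum fun k _ => ?_
        rw [norm_mul]
        exact mul_le_mul (Matrix.norm_entry_le_entrywise_sup_norm A)
          (Matrix.norm_entry_le_entrywise_sup_norm B) (norm_nonneg _) (norm_nonneg _)
    _ = d * ‖A‖ * ‖B‖ := by simp [Finset.sum_const, mul_assoc]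

lemma aux_norm_one {d : ℕ} : ‖(1 : Matrix (Fin d) (Fin d) ℝ)‖ ≤ 1 := by
  rw [Matrix.norm_le_iff (by norm_num)]
  intro i j
  rw [Matrix.one_apply]
  split <;> simp

/-- Lemma 6.3: with `J̃(s) = wH̃(s)w` and `Ṽ(s) = J̃(s)⁻¹`, if `Ṽ(T) = 0`,
`Ṽ'(T) = -I` and `Ṽ'` is Lipschitz on `[0,T]`, then
`‖(T-s)I - Ṽ(s)‖ ≲ (T-s)²`, and consequently `‖J̃(s) - (T-s)⁻¹I‖` is bounded
uniformly over `s < T`. -/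
theorem stmt_12 {d : ℕ} (T : ℝ) (hT : 0 < T)
    (Jtil Vtil V' : ℝ → Matrix (Fin d) (Fin d) ℝ)
    (hVtil : ∀ s ∈ Set.Icc (0 : ℝ) T, Vtil s = (Jtil s)⁻¹)
    (hJV : ∀ s ∈ Set.Icc (0 : ℝ) T, Jtil s = (Vtil s)⁻¹)
    (hderiv : ∀ s ∈ Set.Icc (0 : ℝ) T, HasDerivAt Vtil (V' s) s)
    (hVT : Vtil T = 0) (hV'T : V' T = -1)
    (L : NNReal) (hLip : LipschitzOnWith L V' (Set.Icc 0 T))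
    -- the uniform bound `(T-s)‖H̃(s)‖ ≤ C₀` from Lemma 5.3
    (C₀ : ℝ) (hC₀ : ∀ s ∈ Set.Ico (0 : ℝ) T, (T - s) * ‖Jtil s‖ ≤ C₀) :
    (∃ C₁ > (0 : ℝ), ∀ s ∈ Set.Icc (0 : ℝ) T,
      ‖(T - s) • (1 : Matrix (Fin d) (Fin d) ℝ) - Vtil s‖ ≤ C₁ * (T - s) ^ 2) ∧
    (∃ C > (0 : ℝ), ∀ s ∈ Set.Ico (0 : ℝ) T,
      ‖Jtil s - (T - s)⁻¹ • (1 : Matrix (Fin d) (Fin d) ℝ)‖ ≤ C) := by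
  set C₁ : ℝ := (L : ℝ) + 1 with hC₁def
  have hC₁pos : 0 < C₁ := by positivity
  -- First part
  have key : ∀ s ∈ Set.Icc (0:ℝ) T,
      ‖(T - s) • (1 : Matrix (Fin d) (Fin d) ℝ) - Vtil s‖ ≤ C₁ * (T - s) ^ 2 := by
    intro s hs
    set f : ℝ → Matrix (Fin d) (Fin d) ℝ := fun u => (T - u) • 1 - Vtil u with hf
    have hderivf : ∀ u ∈ Set.Icc s T,
        HasDerivWithinAt f (-(1 : Matrix (Fin d) (Fin d) ℝ) - V' u) (Set.Icc s T) u := by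
      intro u hu
      have hu' : u ∈ Set.Icc (0:ℝ) T := ⟨le_trans hs.1 hu.1, hu.2⟩
      have h1 : HasDerivAt (fun u : ℝ => (T - u) • (1 : Matrix (Fin d) (Fin d) ℝ))
          ((-1 : ℝ) • (1 : Matrix (Fin d) (Fin d) ℝ)) u := by
        exact ((hasDerivAt_id u).const_sub T).smul_const
          (1 : Matrix (Fin d) (Fin d) ℝ)
      have := (h1.sub (hderiv u hu')).hasDerivWithinAt (s := Set.Icc s T)
      rw [neg_one_smul] at this; exact this
    have hbound : ∀ u ∈ Set.Ico s T,
        ‖-(1 : Matrix (Fin d) (Fin d) ℝ) - V' u‖ ≤ (L : ℝ) * (T - s) := by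
      intro u hu
      have hu' : u ∈ Set.Icc (0:ℝ) T := ⟨le_trans hs.1 hu.1, hu.2.le⟩
      have hd := hLip.dist_le_mul u hu' T (Set.right_mem_Icc.2 hT.le)
      rw [dist_eq_norm, Real.dist_eq] at hd
      have heq : (-(1 : Matrix (Fin d) (Fin d) ℝ) - V' u) = -(V' u - V' T) := by
        rw [hV'T]; abel
      rw [heq, norm_neg]
      have h1 : |u - T| = T - u := by rw [abs_sub_comm, abs_of_nonneg (by linarith [hu.2.le])]
      rw [h1] at hd
      calc ‖V' u - V' T‖ ≤ (L : ℝ) * (T - u) := hd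
        _ ≤ (L : ℝ) * (T - s) := by
            have := hu.1
            nlinarith [L.coe_nonneg]
    have mvt := norm_image_sub_le_of_norm_deriv_le_segment' hderivf hbound T
      (Set.right_mem_Icc.2 hs.2)
    have hfT : f T = 0 := by simp [f, hVT]
    have hfs : ‖f s‖ ≤ (L : ℝ) * (T - s) * (T - s) := by
      rw [hfT, zero_sub, norm_neg] at mvt; exact mvt
    have hts : 0 ≤ T - s := by linarith [hs.2]
    calc ‖f s‖ ≤ (L : ℝ) * (T - s) * (T - s) := hfs
      _ ≤ C₁ * (T - s) ^ 2 := by nlinarith [L.coe_nonneg]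
  refine ⟨⟨C₁, hC₁pos, key⟩, ?_⟩
  -- Second part
  have hC₀nn : 0 ≤ C₀ := le_trans (mul_nonneg (by linarith) (norm_nonneg _))
    (hC₀ 0 ⟨le_refl 0, hT⟩)
  refine ⟨(d : ℝ) * C₀ * C₁ + C₁ + 1, by positivity, ?_⟩
  intro s hs
  have hsT : s < T := hs.2
  have hts : 0 < T - s := by linarith
  have hsIcc : s ∈ Set.Icc (0:ℝ) T := ⟨hs.1, hsT.le⟩
  by_cases hu : IsUnit (Vtil s).det
  · -- invertible case
    have hmul : Jtil s * Vtil s = 1 := by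
      rw [hJV s hsIcc]; exact Matrix.nonsing_inv_mul _ hu
    have hid : Jtil s - (T - s)⁻¹ • (1 : Matrix (Fin d) (Fin d) ℝ)
        = (T - s)⁻¹ • (Jtil s * ((T - s) • 1 - Vtil s)) := by
      rw [Matrix.mul_sub, hmul, Matrix.mul_smul, Matrix.mul_one, smul_sub, smul_smul,
        inv_mul_cancel₀ hts.ne', one_smul]
    rw [hid, norm_smul, Real.norm_eq_abs, abs_of_pos (by positivity)]
    have hJ : ‖Jtil s‖ ≤ C₀ * (T - s)⁻¹ := by
      have h := hC₀ s hs
      rw [mul_comm, ← le_div_iff₀ hts] at h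
      simpa [div_eq_mul_inv] using h
    have hX := key s hsIcc
    have hmul_le := aux_norm_mul (Jtil s) ((T - s) • (1 : Matrix (Fin d) (Fin d) ℝ) - Vtil s)
    have h1 : ‖Jtil s * ((T - s) • (1 : Matrix (Fin d) (Fin d) ℝ) - Vtil s)‖
        ≤ (d : ℝ) * (C₀ * (T - s)⁻¹) * (C₁ * (T - s) ^ 2) := by
      refine hmul_le.trans ?_
      have hd0 : (0:ℝ) ≤ d := Nat.cast_nonneg d
      have := mul_le_mul (mul_le_mul_of_nonneg_left hJ hd0) hX (norm_nonneg _)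
        (by positivity)
      linarith
    calc (T - s)⁻¹ * ‖Jtil s * ((T - s) • (1 : Matrix (Fin d) (Fin d) ℝ) - Vtil s)‖
        ≤ (T - s)⁻¹ * ((d : ℝ) * (C₀ * (T - s)⁻¹) * (C₁ * (T - s) ^ 2)) := by
          exact mul_le_mul_of_nonneg_left h1 (by positivity)
      _ = (d : ℝ) * C₀ * C₁ := by field_simp
      _ ≤ (d : ℝ) * C₀ * C₁ + C₁ + 1 := by linarith
  · -- non-invertible case
    have hJ0 : Jtil s = 0 := by
      rw [hJV s hsIcc]; exact Matrix.nonsing_inv_apply_not_isUnit _ hu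
    rcases Nat.eq_zero_or_pos d with hd | hd
    · subst hd
      have : Jtil s - (T - s)⁻¹ • (1 : Matrix (Fin 0) (Fin 0) ℝ) = 0 := by
        ext i j; exact i.elim0
      rw [this, norm_zero]; positivity
    · have hV0 : Vtil s = 0 := by
        rw [hVtil s hsIcc, hJ0, Matrix.nonsing_inv_apply_not_isUnit]
        haveI : Nonempty (Fin d) := ⟨⟨0, hd⟩⟩; rw [Matrix.det_zero]
        exact not_isUnit_zero
      have hKey := key s hsIcc
      rw [hV0, sub_zero, norm_smul, Real.norm_eq_abs, abs_of_pos hts] at hKey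
      have hone : (1:ℝ) ≤ ‖(1 : Matrix (Fin d) (Fin d) ℝ)‖ := by
        have := Matrix.norm_entry_le_entrywise_sup_norm
          (1 : Matrix (Fin d) (Fin d) ℝ) (i := ⟨0, hd⟩) (j := ⟨0, hd⟩)
        simpa using this
      have h2 : (T - s) ≤ C₁ * (T - s) ^ 2 := by nlinarith
      have h3 : (T - s)⁻¹ ≤ C₁ := by
        rw [inv_le_iff_one_le_mul₀ hts]
        nlinarith
      rw [hJ0, zero_sub, norm_neg, norm_smul, Real.norm_eq_abs, abs_of_pos (by positivity)]
      calc (T - s)⁻¹ * ‖(1 : Matrix (Fin d) (Fin d) ℝ)‖ ≤ C₁ * 1 := by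
            exact mul_le_mul h3 aux_norm_one (norm_nonneg _) hC₁pos.le
        _ ≤ (d : ℝ) * C₀ * C₁ + C₁ + 1 := by
            have : (0:ℝ) ≤ (d : ℝ) * C₀ * C₁ := by positivity
            linarith
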